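/- Kuznetsov's Theorem on maximal clones. Let A be a finite set with |A| ≥ 2. Then every proper subclone of O_A is contained in a maximal clone on A, and the number of maximal clones on A is finite. -/

import Mathlib

universe u

/-- The type of finitary operations (of positive arity `n + 1`) on `A`. -/
abbrev Ops (A : Type u) : Type u := Σ n : ℕ, (Fin (n + 1) → A) → A

/-- A set of finitary operations on `A` is a clone if it contains all projection
operations and is closed under composition. -/
def IsClone {A : Type u} (C : Set (Ops A)) : Prop :=
  (∀ (n : ℕ) (i : Fin (n + 1)), (⟨n, fun x => x i⟩ : Ops A) ∈ C) ∧
  ∀ (n m : ℕ) (f : (Fin (n + 1) → A) → A) (g : Fin (n + 1) → (Fin (m + 1) → A) → A),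
    (⟨n, f⟩ : Ops A) ∈ C → (∀ i, (⟨m, g i⟩ : Ops A) ∈ C) →
    (⟨m, fun x => f fun i => g i x⟩ : Ops A) ∈ C

/-- The clone generated by a set `F` of operations: the least clone containing `F`. -/
def cloneGen {A : Type u} (F : Set (Ops A)) : Set (Ops A) :=
  ⋂₀ {C : Set (Ops A) | IsClone C ∧ F ⊆ C}

/-- The clone of all projection operations on `A`. -/
def projClone (A : Type u) : Set (Ops A) :=
  {f : Ops A | ∃ i : Fin (f.1 + 1), f.2 = fun x => x i}

/-- A clone `M` is maximal if it is a proper subclone of the clone of all operations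
and the clone of all operations is the only clone properly containing it. -/
def IsMaximalClone {A : Type u} (M : Set (Ops A)) : Prop :=
  IsClone M ∧ M ≠ Set.univ ∧
    ∀ D : Set (Ops A), IsClone D → M ⊆ D → D = M ∨ D = Set.univ

/-- A clone `C` is minimal if the clone of projections is its unique proper subclone. -/
def IsMinimalClone {A : Type u} (C : Set (Ops A)) : Prop :=
  IsClone C ∧ C ≠ projClone A ∧
    ∀ D : Set (Ops A), IsClone D → D ⊆ C → D = projClone A ∨ D = C

/-- An `n`-ary operation `f` preserves a `k`-ary relation `ρ` if applying `f`
coordinatewise to tuples from `ρ` always yields a tuple in `ρ`. -/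
def Preserves {A : Type u} {n k : ℕ} (f : (Fin n → A) → A) (ρ : Set (Fin k → A)) : Prop :=
  ∀ t : Fin n → Fin k → A, (∀ i, t i ∈ ρ) → (fun j => f fun i => t i j) ∈ ρ

/-- `Pol ρ` is the clone of all operations preserving the relation `ρ`. -/
def Pol {A : Type u} {k : ℕ} (ρ : Set (Fin k → A)) : Set (Ops A) :=
  {f : Ops A | Preserves f.2 ρ}

/-- selector chain -/
def chainSel {A : Type u} [DecidableEq A] {n : ℕ} (f : (Fin (n + 2) → A) → A) :
    List A → ((Fin (n + 2) → A) → A)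
  | [] => fun x => x 0
  | b :: t => fun x =>
      if x (Fin.last (n + 1)) = b then f (Fin.snoc (Fin.init x) b) else chainSel f t x

lemma chainSel_spec {A : Type u} [DecidableEq A] {n : ℕ} (f : (Fin (n + 2) → A) → A) :
    ∀ (l : List A) (x : Fin (n + 2) → A), x (Fin.last (n + 1)) ∈ l → chainSel f l x = f x
  | [], x, hx => absurd hx List.not_mem_nil
  | b :: t, x, hx => by
    rw [chainSel]
    dsimp only
    by_cases hb : x (Fin.last (n + 1)) = b
    · rw [if_pos hb, ← hb, Fin.snoc_init_self]
    · rw [if_neg hb]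
      exact chainSel_spec f t x (by
        rcases List.mem_cons.mp hx with h | h
        · exact absurd h hb
        · exact h)

lemma chainSel_mem {A : Type u} [DecidableEq A] {C : Set (Ops A)} (hC : IsClone C)
    (h3 : ∀ h : (Fin 3 → A) → A, (⟨2, h⟩ : Ops A) ∈ C) {n : ℕ}
    {f : (Fin (n + 2) → A) → A}
    (hf : ∀ b : A, (⟨n, fun y => f (Fin.snoc y b)⟩ : Ops A) ∈ C) :
    ∀ l : List A, (⟨n + 1, chainSel f l⟩ : Ops A) ∈ C
  | [] => hC.1 (n + 1) 0
  | b :: t => by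
    have ht := chainSel_mem hC h3 hf t
    have hg1 : (⟨n + 1, fun x => f (Fin.snoc (Fin.init x) b)⟩ : Ops A) ∈ C :=
      hC.2 n (n + 1) (fun y => f (Fin.snoc y b)) (fun i x => x i.castSucc)
        (hf b) (fun i => hC.1 (n + 1) i.castSucc)
    have hcomp := hC.2 2 (n + 1) (fun y => if y 0 = b then y 1 else y 2)
      ![fun x => x (Fin.last (n + 1)), fun x => f (Fin.snoc (Fin.init x) b), chainSel f t]
      (h3 _) (fun i => by
        match i with
        | ⟨0, _⟩ => exact hC.1 (n + 1) (Fin.last (n + 1))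
        | ⟨1, _⟩ => exact hg1
        | ⟨2, _⟩ => exact ht)
    exact hcomp

lemma clone_eq_univ_of_ternary {A : Type u} [Fintype A] [DecidableEq A] {C : Set (Ops A)}
    (hC : IsClone C) (h3 : ∀ h : (Fin 3 → A) → A, (⟨2, h⟩ : Ops A) ∈ C) :
    C = Set.univ := by
  have key : ∀ (n : ℕ) (f : (Fin (n + 1) → A) → A), (⟨n, f⟩ : Ops A) ∈ C := by
    intro n
    induction n with
    | zero =>
      intro f
      have h1 : (⟨0, fun x : Fin 1 → A => f fun _ => x 0⟩ : Ops A) ∈ C :=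
        hC.2 2 0 (fun y : Fin 3 → A => f fun _ => y 0) (fun _ x => x 0)
          (h3 _) (fun _ => hC.1 0 0)
      have hfe : f = fun x : Fin 1 → A => f fun _ => x 0 := by
        funext x; congr 1; funext i
        exact congrArg x (Fin.fin_one_eq_zero i)
      rw [hfe]; exact h1
    | succ n ih =>
      intro f
      have hmem := chainSel_mem hC h3 (f := f) (fun b => ih _) Finset.univ.toList
      have hfun : chainSel f Finset.univ.toList = f := by
        funext x
        exact chainSel_spec f _ x (by simp)
      rwa [hfun] at hmem
  ext ⟨n, f⟩
  simpa using key n f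

lemma chain_bound {α : Type*} {c : Set (Set α)} (hchain : IsChain (· ⊆ ·) c)
    (hcne : c.Nonempty) {s : Set α} (hs : s.Finite) (hsub : s ⊆ ⋃₀ c) :
    ∃ D ∈ c, s ⊆ D := by
  have main : ∀ s : Set α, s.Finite → s ⊆ ⋃₀ c → ∃ D ∈ c, s ⊆ D := by
    intro s hs
    refine Set.Finite.induction_on (motive := fun s _ => s ⊆ ⋃₀ c → ∃ D ∈ c, s ⊆ D) s hs ?_ ?_
    · intro _
      obtain ⟨D, hD⟩ := hcne
      exact ⟨D, hD, Set.empty_subset D⟩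
    · intro a t _ _ ih hsub
      obtain ⟨D1, hD1, hsD1⟩ := ih ((Set.subset_insert a t).trans hsub)
      obtain ⟨D2, hD2c, haD2⟩ := hsub (Set.mem_insert a t)
      rcases hchain.total hD1 hD2c with hle | hle
      · exact ⟨D2, hD2c, Set.insert_subset haD2 (hsD1.trans hle)⟩
      · exact ⟨D1, hD1, Set.insert_subset (hle haD2) hsD1⟩
  exact main s hs hsub

lemma pol_isClone {A : Type u} {k : ℕ} (ρ : Set (Fin k → A)) : IsClone (Pol ρ) := by
  constructor
  · intro n i t ht
    exact ht i
  · intro n m f g hf hg t ht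
    exact hf (fun i j => g i fun i' => t i' j) (fun i => hg i t ht)

/-- The canonical `card (Fin 3 → A)`-ary relation encoding the ternary part of `S`. -/
def ternGraph (A : Type u) [Fintype A] (S : Set (Ops A)) :
    Set (Fin (Fintype.card (Fin 3 → A)) → A) :=
  {t | ∃ h : (Fin 3 → A) → A, (⟨2, h⟩ : Ops A) ∈ S ∧
        t = fun j => h ((Fintype.equivFin (Fin 3 → A)).symm j)}

lemma subset_pol {A : Type u} [Fintype A] {M : Set (Ops A)} (hM : IsClone M) :
    M ⊆ Pol (ternGraph A M) := by
  rintro ⟨n, f⟩ hf t ht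
  choose h hh hte using ht
  refine ⟨fun y => f fun i => h i y, hM.2 n 2 f h hf hh, ?_⟩
  funext j
  show f (fun i => t i j) = f fun i => h i ((Fintype.equivFin (Fin 3 → A)).symm j)
  congr 1
  funext i
  exact congrFun (hte i) j

lemma pol_tern_mem {A : Type u} [Fintype A] {M : Set (Ops A)} (hM : IsClone M)
    {h : (Fin 3 → A) → A} (hh : (⟨2, h⟩ : Ops A) ∈ Pol (ternGraph A M)) :
    (⟨2, h⟩ : Ops A) ∈ M := by
  have hcol : ∀ i : Fin 3,
      (fun j => (Fintype.equivFin (Fin 3 → A)).symm j i) ∈ ternGraph A M :=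
    fun i => ⟨fun y => y i, hM.1 2 i, rfl⟩
  obtain ⟨h', hh', heq⟩ :=
    hh (fun i j => (Fintype.equivFin (Fin 3 → A)).symm j i) hcol
  have : h = h' := by
    funext y
    have := congrFun heq ((Fintype.equivFin (Fin 3 → A)) y)
    simpa using this
  rw [this]; exact hh'

lemma maximal_eq_pol {A : Type u} [Fintype A] [DecidableEq A] {M : Set (Ops A)}
    (hM : IsMaximalClone M) : M = Pol (ternGraph A M) := by
  obtain ⟨hCl, hne, hmax⟩ := hM
  rcases hmax _ (pol_isClone _) (subset_pol hCl) with h | h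
  · exact h.symm
  · exact absurd (clone_eq_univ_of_ternary hCl fun h3f =>
      pol_tern_mem hCl (by rw [h]; trivial)) hne

/-- **Kuznetsov's Theorem on maximal clones.**  Let `A` be a finite set with `|A| ≥ 2`.
Every proper subclone of the clone of all operations on `A` is contained in a maximal
clone, and the number of maximal clones on `A` is finite. -/
theorem kuznetsov_maximal_clones {A : Type u} [Fintype A] (hA : 2 ≤ Fintype.card A) :
    (∀ C : Set (Ops A), IsClone C → C ≠ Set.univ →
        ∃ M : Set (Ops A), IsMaximalClone M ∧ C ⊆ M) ∧
    {M : Set (Ops A) | IsMaximalClone M}.Finite := by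
  classical
  have hT : ({f : Ops A | f.1 = 2}).Finite := by
    have : {f : Ops A | f.1 = 2} = Set.range (fun g : (Fin 3 → A) → A => (⟨2, g⟩ : Ops A)) := by
      ext ⟨n, f⟩
      constructor
      · rintro (h : n = 2); subst h; exact ⟨f, rfl⟩
      · rintro ⟨g, hg⟩; cases hg; rfl
    rw [this]; exact Set.finite_range _
  constructor
  · intro C hC hCne
    have hub : ∀ c ⊆ {D : Set (Ops A) | IsClone D ∧ C ⊆ D ∧ D ≠ Set.univ},
        IsChain (· ⊆ ·) c → c.Nonempty →
        ∃ ub ∈ {D : Set (Ops A) | IsClone D ∧ C ⊆ D ∧ D ≠ Set.univ}, ∀ s ∈ c, s ⊆ ub := by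
      intro c hcS hchain hcne
      refine ⟨⋃₀ c, ⟨⟨?_, ?_⟩, ?_, ?_⟩, fun s hs => Set.subset_sUnion_of_mem hs⟩
      · intro n i
        obtain ⟨D, hD⟩ := hcne
        exact ⟨D, hD, (hcS hD).1.1 n i⟩
      · intro n m f g hf hg
        have hsub : insert (⟨n, f⟩ : Ops A) (Set.range fun i => (⟨m, g i⟩ : Ops A)) ⊆ ⋃₀ c := by
          rintro p (rfl | ⟨i, rfl⟩)
          · exact hf
          · exact hg i
        obtain ⟨D, hDc, hsD⟩ := chain_bound hchain hcne
          ((Set.finite_range _).insert _) hsub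
        exact ⟨D, hDc, (hcS hDc).1.2 n m f g (hsD (Set.mem_insert _ _))
          fun i => hsD (Set.mem_insert_of_mem _ ⟨i, rfl⟩)⟩
      · obtain ⟨D, hD⟩ := hcne
        exact ((hcS hD).2.1).trans (Set.subset_sUnion_of_mem hD)
      · intro huniv
        have hsub : {f : Ops A | f.1 = 2} ⊆ ⋃₀ c := by
          rw [huniv]; exact Set.subset_univ _
        obtain ⟨D, hDc, hsD⟩ := chain_bound hchain hcne hT hsub
        exact (hcS hDc).2.2 (clone_eq_univ_of_ternary (hcS hDc).1
          fun h => hsD (show ((⟨2, h⟩ : Ops A)).1 = 2 from rfl))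
    obtain ⟨M, hCM, hMmax⟩ := zorn_subset_nonempty
        {D : Set (Ops A) | IsClone D ∧ C ⊆ D ∧ D ≠ Set.univ} hub C ⟨hC, subset_rfl, hCne⟩
    obtain ⟨hMcl, hCM', hMne⟩ := hMmax.prop
    refine ⟨M, ⟨hMcl, hMne, ?_⟩, hCM⟩
    intro D hD hMD
    by_cases hDu : D = Set.univ
    · right; exact hDu
    · left
      exact Set.Subset.antisymm (hMmax.2 ⟨hD, hCM'.trans hMD, hDu⟩ hMD) hMD
  · apply Set.Finite.of_finite_image (f := fun M => M ∩ {f : Ops A | f.1 = 2})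
    · apply hT.finite_subsets.subset
      rintro S ⟨M, _, rfl⟩
      exact Set.inter_subset_right
    · intro M hM N hN hMN
      have hmem : ∀ h : (Fin 3 → A) → A, ((⟨2, h⟩ : Ops A) ∈ M ↔ (⟨2, h⟩ : Ops A) ∈ N) := by
        intro h
        have := Set.ext_iff.mp hMN ⟨2, h⟩
        simpa using this
      have key : ternGraph A M = ternGraph A N := by
        ext t
        constructor
        · rintro ⟨h, hh, rfl⟩; exact ⟨h, (hmem h).mp hh, rfl⟩
        · rintro ⟨h, hh, rfl⟩; exact ⟨h, (hmem h).mpr hh, rfl⟩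
      rw [maximal_eq_pol hM, maximal_eq_pol hN, key]
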